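/- arXiv:2401.01353 — 6 statements merged into one kernel-verified Lean document; each statement's English description precedes it below -/
import Mathlib

section
/- Binding of Pedersen commitments reduces to discrete log: if m0·G + r0·H = m1·G + r1·H with m0 ≠ m1 in Z_q (q prime), then H = ((m0 - m1)/(r1 - r0))·G, i.e., the discrete logarithm of H to base G is (m0 - m1)·(r1 - r0)⁻¹, and in particular r0 ≠ r1 provided G ≠ 0. -/
/-- Binding of Pedersen commitments reduces to discrete log: two openings of the
same commitment with distinct messages reveal the discrete logarithm of `H` to
base `G`, and in particular the randomnesses must differ. -/
theorem pedersen_binding_dlog (q : ℕ) [Fact q.Prime]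
    (G : Type*) [AddCommGroup G] [Module (ZMod q) G] (g h : G)
    (hg : g ≠ 0) (hh : h ≠ 0)
    (m0 m1 r0 r1 : ZMod q)
    (heq : m0 • g + r0 • h = m1 • g + r1 • h)
    (hm : m0 ≠ m1) :
    r0 ≠ r1 ∧ h = ((m0 - m1) / (r1 - r0)) • g := by
  have key : (m0 - m1) • g = (r1 - r0) • h := by
    rw [sub_smul, sub_smul]
    rw [sub_eq_sub_iff_add_eq_add]
    linear_combination (norm := module) heq
  have hr : r0 ≠ r1 := by
    intro h01
    rw [h01, sub_self, zero_smul, smul_eq_zero] at key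
    rcases key with h1 | h1
    · exact hm (sub_eq_zero.mp h1)
    · exact hg h1
  refine ⟨hr, ?_⟩
  have hne : r1 - r0 ≠ 0 := sub_ne_zero.mpr (Ne.symm hr)
  rw [div_eq_mul_inv, mul_comm, mul_smul, key, smul_smul,
    inv_mul_cancel₀ hne, one_smul]
end

section
/- Special soundness of the opening proof π_open: given two accepting transcripts (t_1, c, (s_k), s_x) and (t_1, c', (s'_k), s'_x) with the same first message and c ≠ c', satisfying c·C + t_1 = s_x·H + Σ_k s_k·G_k and c'·C + t_1 = s'_x·H + Σ_k s'_k·G_k, the extracted values m_k = (c-c')⁻¹(s_k - s'_k) and r = (c-c')⁻¹(s_x - s'_x) satisfy C = r·H + Σ_k m_k·G_k. -/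
/-- Special soundness of the opening proof `π_open`: from two accepting
transcripts with the same first message and distinct challenges, the extracted
values form a valid opening of the commitment `C`. -/
theorem pi_open_special_soundness (q : ℕ) [Fact q.Prime]
    (G : Type*) [AddCommGroup G] [Module (ZMod q) G] (n : ℕ)
    (Gv : Fin n → G) (H : G) (C t1 : G)
    (c c' : ZMod q) (hcc : c ≠ c')
    (s s' : Fin n → ZMod q) (sx sx' : ZMod q)
    (hver : c • C + t1 = sx • H + ∑ k, s k • Gv k)
    (hver' : c' • C + t1 = sx' • H + ∑ k, s' k • Gv k) :
    C = ((c - c')⁻¹ * (sx - sx')) • H +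
        ∑ k, ((c - c')⁻¹ * (s k - s' k)) • Gv k := by
  have hd : c - c' ≠ 0 := sub_ne_zero.mpr hcc
  have h : (c - c') • C = (sx - sx') • H + ∑ k, (s k - s' k) • Gv k := by
    have := congrArg₂ (· - ·) hver hver'
    simp only [sub_smul, Finset.sum_sub_distrib] at this ⊢
    abel_nf at this ⊢
    linear_combination (norm := abel) this
  have := congrArg (fun x => (c - c')⁻¹ • x) h
  simp only [smul_add, Finset.smul_sum, smul_smul, inv_mul_cancel₀ hd, one_smul] at this
  simpa [mul_smul] using this
end

section
/- Special soundness of the issuance proof π_issue: given two accepting transcripts (t_1, t_2, c, s_1, s_3, s_4, s_5) and (t_1, t_2, c', s'_1, s'_3, s'_4, s'_5) with c ≠ c' satisfying the two verification equations, the extracted witness m_k = (c-c')⁻¹(s_k - s'_k) for k ∈ {1,3,4} and r = (c-c')⁻¹(s_5 - s'_5) satisfies C = r·H + m_1·G_1 + 0·G_2 + m_3·G_3 + m_4·G_4 and pk = m_3·G. -/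
/-- Special soundness of the issuance proof `π_issue`: two accepting transcripts
with the same first messages and distinct challenges yield an extracted witness
opening `C` (with second entry `0`) and matching the public key `pk`. -/
theorem pi_issue_special_soundness (q : ℕ) [Fact q.Prime]
    (Grp : Type*) [AddCommGroup Grp] [Module (ZMod q) Grp]
    (G G1 G2 G3 G4 H : Grp) (C pk t1 t2 : Grp)
    (c c' : ZMod q) (hcc : c ≠ c')
    (s1 s3 s4 s5 s1' s3' s4' s5' : ZMod q)
    (hver1 : c • pk + t1 = s3 • G)
    (hver1' : c' • pk + t1 = s3' • G)
    (hver2 : c • C + t2 = s5 • H + s1 • G1 + s3 • G3 + s4 • G4)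
    (hver2' : c' • C + t2 = s5' • H + s1' • G1 + s3' • G3 + s4' • G4) :
    C = ((c - c')⁻¹ * (s5 - s5')) • H + ((c - c')⁻¹ * (s1 - s1')) • G1 +
        (0 : ZMod q) • G2 + ((c - c')⁻¹ * (s3 - s3')) • G3 +
        ((c - c')⁻¹ * (s4 - s4')) • G4 ∧
    pk = ((c - c')⁻¹ * (s3 - s3')) • G := by
  have hd : c - c' ≠ 0 := sub_ne_zero.mpr hcc
  have hinv : (c - c')⁻¹ * (c - c') = 1 := inv_mul_cancel₀ hd
  have h1 : (c - c') • pk = (s3 - s3') • G := by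
    have := congrArg₂ (· - ·) hver1 hver1'
    simpa [sub_smul, add_sub_add_right_eq_sub] using this
  have h2 : (c - c') • C = (s5 - s5') • H + (s1 - s1') • G1 + (s3 - s3') • G3
      + (s4 - s4') • G4 := by
    have := congrArg₂ (· - ·) hver2 hver2'
    simp only [add_sub_add_right_eq_sub] at this
    rw [sub_smul, this]
    simp only [sub_smul]
    abel
  constructor
  · have := congrArg (fun x => (c - c')⁻¹ • x) h2
    simpa [smul_smul, smul_add, hinv, mul_comm] using this
  · have := congrArg (fun x => (c - c')⁻¹ • x) h1
    simpa [smul_smul, hinv] using this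
end

section
/- Special soundness of the addition proof π_add: given two accepting transcripts with the same first messages (t_1, t_2, t_3, t_4) and distinct challenges c ≠ c', the extracted values x = (s_3-s'_3)/(c-c'), r_1 = (s_4-s'_4)/(c-c'), y = (s_5-s'_5)/(c-c'), r_2 = (s_6-s'_6)/(c-c'), u = (s_1-s'_1)/(c-c'), v = (s_2-s'_2)/(c-c') satisfy C_1 = x·G + r_1·H, C_2 = y·G + r_2·H, and C_3 = u·G + v·H; moreover if additionally C_3 = C_1 + C_2 then u = x + y and v = r_1 + r_2 whenever G, H are part of a generating pair with no nontrivial relations. -/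
private lemma extract_open (q : ℕ) [Fact q.Prime]
    (Grp : Type*) [AddCommGroup Grp] [Module (ZMod q) Grp]
    (G H C T : Grp) (c c' a b a' b' : ZMod q) (hcc : c ≠ c')
    (h : a • G + b • H = T + c • C) (h' : a' • G + b' • H = T + c' • C) :
    C = ((a - a') / (c - c')) • G + ((b - b') / (c - c')) • H := by
  have hd : c - c' ≠ 0 := sub_ne_zero.mpr hcc
  have key : (a - a') • G + (b - b') • H = (c - c') • C := by
    rw [sub_smul, sub_smul, sub_smul]
    have := congrArg₂ (· - ·) h h'
    abel_nf
    abel_nf at this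
    linear_combination (norm := abel) this
  have := congrArg (fun z => ((c - c')⁻¹) • z) key
  simp only [smul_add, smul_smul, inv_mul_cancel₀ hd, one_smul] at this
  rw [← this, div_eq_inv_mul, div_eq_inv_mul]

/-- Special soundness of the addition proof `π_add`: two accepting transcripts
with the same first messages and distinct challenges yield extracted openings of
`C₁`, `C₂`, `C₃`; moreover, if `C₃ = C₁ + C₂` and `G, H` admit no nontrivial
discrete-log relation, the opening of `C₃` is the sum of the openings. -/
theorem pi_add_special_soundness (q : ℕ) [Fact q.Prime]
    (Grp : Type*) [AddCommGroup Grp] [Module (ZMod q) Grp]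
    (G H : Grp) (C1 C2 C3 t1 t2 t3 t4 : Grp)
    (c c' : ZMod q) (hcc : c ≠ c')
    (s1 s2 s3 s4 s5 s6 s1' s2' s3' s4' s5' s6' : ZMod q)
    (hv1 : s3 • G + s4 • H = t3 + c • C1)
    (hv1' : s3' • G + s4' • H = t3 + c' • C1)
    (hv2 : s5 • G + s6 • H = t4 + c • C2)
    (hv2' : s5' • G + s6' • H = t4 + c' • C2)
    (hv3 : s1 • G + s2 • H = (t1 + t2) + c • C3)
    (hv3' : s1' • G + s2' • H = (t1 + t2) + c' • C3) :
    C1 = ((s3 - s3') / (c - c')) • G + ((s4 - s4') / (c - c')) • H ∧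
    C2 = ((s5 - s5') / (c - c')) • G + ((s6 - s6') / (c - c')) • H ∧
    C3 = ((s1 - s1') / (c - c')) • G + ((s2 - s2') / (c - c')) • H ∧
    ((∀ a b : ZMod q, a • G + b • H = 0 → a = 0 ∧ b = 0) → C3 = C1 + C2 →
      (s1 - s1') / (c - c') = (s3 - s3') / (c - c') + (s5 - s5') / (c - c') ∧
      (s2 - s2') / (c - c') = (s4 - s4') / (c - c') + (s6 - s6') / (c - c')) := by
  have h1 := extract_open q Grp G H C1 t3 c c' s3 s4 s3' s4' hcc hv1 hv1'
  have h2 := extract_open q Grp G H C2 t4 c c' s5 s6 s5' s6' hcc hv2 hv2'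
  have h3 := extract_open q Grp G H C3 (t1 + t2) c c' s1 s2 s1' s2' hcc hv3 hv3'
  refine ⟨h1, h2, h3, fun hnt hsum => ?_⟩
  have key : ((s1 - s1') / (c - c') - ((s3 - s3') / (c - c') + (s5 - s5') / (c - c'))) • G
      + ((s2 - s2') / (c - c') - ((s4 - s4') / (c - c') + (s6 - s6') / (c - c'))) • H = 0 := by
    rw [sub_smul, sub_smul, add_smul, add_smul]
    rw [h1, h2, h3] at hsum
    linear_combination (norm := abel) hsum
  obtain ⟨e1, e2⟩ := hnt _ _ key
  constructor <;> [linear_combination e1; linear_combination e2]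
end

section
/- Special soundness of the multiplication proof π_mul: given two accepting transcripts with common first messages (t_1, t_2, t_3) and challenges c ≠ c', the extracted values x = (s_1−s'_1)/(c−c'), r_1 = (s_2−s'_2)/(c−c'), y = (s_3−s'_3)/(c−c'), r_2 = (s_4−s'_4)/(c−c'), e = (s_5−s'_5)/(c−c') satisfy C_1 = x·G + r_1·H, C_2 = y·G + r_2·H, and C_3 = y·C_1 + e·H = (x·y)·G + (r_1·y + e)·H; in particular C_3 commits to the product x·y with randomness r_3 = r_1·y + e. -/
/-- Special soundness of the multiplication proof `π_mul`: two accepting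
transcripts with common first messages and distinct challenges yield extracted
openings of `C₁`, `C₂`, and `C₃`, and `C₃` commits to the product `x·y` with
randomness `r₁·y + e`. -/
theorem pi_mul_special_soundness (q : ℕ) [Fact q.Prime]
    (Grp : Type*) [AddCommGroup Grp] [Module (ZMod q) Grp]
    (G H : Grp) (C1 C2 C3 t1 t2 t3 : Grp)
    (c c' : ZMod q) (hcc : c ≠ c')
    (s1 s2 s3 s4 s5 s1' s2' s3' s4' s5' : ZMod q)
    (hv1 : s1 • G + s2 • H = t1 + c • C1)
    (hv1' : s1' • G + s2' • H = t1 + c' • C1)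
    (hv2 : s3 • G + s4 • H = t2 + c • C2)
    (hv2' : s3' • G + s4' • H = t2 + c' • C2)
    (hv3 : s3 • C1 + s5 • H = t3 + c • C3)
    (hv3' : s3' • C1 + s5' • H = t3 + c' • C3) :
    C1 = ((s1 - s1') / (c - c')) • G + ((s2 - s2') / (c - c')) • H ∧
    C2 = ((s3 - s3') / (c - c')) • G + ((s4 - s4') / (c - c')) • H ∧
    C3 = ((s3 - s3') / (c - c')) • C1 + ((s5 - s5') / (c - c')) • H ∧
    C3 = (((s1 - s1') / (c - c')) * ((s3 - s3') / (c - c'))) • G +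
         (((s2 - s2') / (c - c')) * ((s3 - s3') / (c - c')) +
           (s5 - s5') / (c - c')) • H := by
  have hd : c - c' ≠ 0 := sub_ne_zero.2 hcc
  have key : ∀ (X Y Z T : Grp) (u u' v v' : ZMod q),
      u • X + v • Y = T + c • Z → u' • X + v' • Y = T + c' • Z →
      Z = ((u - u') / (c - c')) • X + ((v - v') / (c - c')) • Y := by
    intro X Y Z T u u' v v' h h'
    have h3 : (c - c') • Z = (u - u') • X + (v - v') • Y := by
      have := congrArg₂ (· - ·) h h'
      simp only [sub_smul] at *
      abel_nf at this ⊢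
      linear_combination (norm := abel) -this
    have : Z = (c - c')⁻¹ • ((c - c') • Z) := by
      rw [smul_smul, inv_mul_cancel₀ hd, one_smul]
    rw [this, h3, smul_add, smul_smul, smul_smul, div_eq_inv_mul, div_eq_inv_mul]
  have e1 := key G H C1 t1 s1 s1' s2 s2' hv1 hv1'
  have e2 := key G H C2 t2 s3 s3' s4 s4' hv2 hv2'
  have e3 := key C1 H C3 t3 s3 s3' s5 s5' hv3 hv3'
  refine ⟨e1, e2, e3, ?_⟩
  rw [e3, e1]
  module
end

section
/- Blinded Pedersen commitments preserve binding: if (z^γ, C^γ) = (z^{γ'}, C'^{γ'}) where z ≠ 1 is an element of a group of prime order q, γ, γ' ∈ Z_q are nonzero, and C = Comm(m, r), C' = Comm(m', r') are Pedersen commitments, then γ = γ' and C = C'; hence any opening of the blinded commitment to distinct message vectors yields a breach of binding of the underlying Pedersen commitment. -/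
/-- Blinded Pedersen commitments preserve binding: in a (multiplicative) cyclic
group of prime order `q`, if the blinded commitments `(z^γ, C^γ)` and
`(z^γ', C'^γ')` coincide, where `z ≠ 1`, the blinding exponents `γ, γ'` are
nonzero, and `C, C'` are Pedersen commitments `Comm(m, r) = g^m · h^r`, then
`γ = γ'` and `C = C'`. -/
theorem blinded_pedersen_binding (q : ℕ) [Fact q.Prime]
    (G : Type*) [CommGroup G] [Fintype G] (hcard : Fintype.card G = q)
    (g h z : G) (hz : z ≠ 1)
    (γ γ' : ZMod q) (hγ : γ ≠ 0) (hγ' : γ' ≠ 0)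
    (m r m' r' : ZMod q) (C C' : G)
    (hC : C = g ^ m.val * h ^ r.val)
    (hC' : C' = g ^ m'.val * h ^ r'.val)
    (heq : (z ^ γ.val, C ^ γ.val) = (z ^ γ'.val, C' ^ γ'.val)) :
    γ = γ' ∧ C = C' := by
  obtain ⟨h1, h2⟩ := Prod.mk.injEq .. ▸ heq
  have hq : q.Prime := Fact.out
  have hord : orderOf z = q := by
    have := orderOf_dvd_card (x := z)
    rw [hcard] at this
    rcases hq.eq_one_or_self_of_dvd _ this with h' | h'
    · exact absurd (orderOf_eq_one_iff.mp h') hz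
    · exact h'
  have hgg : γ = γ' := by
    have hmod := pow_eq_pow_iff_modEq.mp h1
    rw [hord] at hmod
    have h1' := ZMod.val_lt γ
    have h2' := ZMod.val_lt γ'
    have hv : γ.val = γ'.val := by
      simpa [Nat.ModEq, hord, Nat.mod_eq_of_lt h1', Nat.mod_eq_of_lt h2'] using hmod
    exact ZMod.val_injective q hv
  subst hgg
  refine ⟨rfl, ?_⟩
  have hcop : (Nat.card G).Coprime γ.val := by
    rw [Nat.card_eq_fintype_card, hcard, hq.coprime_iff_not_dvd]
    intro hdvd
    have hlt := ZMod.val_lt γ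
    have hne : γ.val ≠ 0 := fun h0 => hγ ((ZMod.val_eq_zero _).mp h0)
    exact Nat.not_dvd_of_pos_of_lt (Nat.pos_of_ne_zero hne) hlt hdvd
  exact (powCoprime hcop).injective h2
end
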